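/- Suppose in addition that C is convex. Let L > 0 and x ∈ C. Let η ∈ Proj_D(Ax) and let u = Proj_C(x − Aᵀ(Ax − η)/L) (the projection onto the closed convex set C). Then ½ d(Au, D)² ≤ ½ d(Ax, D)² − ((2L − ‖A‖²)/2)·‖u − x‖². -/
import Mathlib


open Filter Topology Metric
open scoped RealInnerProductSpace

noncomputable section

/-- The set of projections of `y` onto `S`. -/
def projSet {E : Type*} [NormedAddCommGroup E] (S : Set E) (y : E) : Set E :=
  {z | z ∈ S ∧ dist y z = Metric.infDist y S}

/-- The horizon cone of `S`. -/
def horizonCone {E : Type*} [NormedAddCommGroup E] [NormedSpace ℝ E] (S : Set E) : Set E :=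
  {x | ∃ (u : ℕ → E) (β : ℕ → ℝ), (∀ t, u t ∈ S) ∧ (∀ t, 0 < β t) ∧
    Tendsto β atTop (𝓝 (0 : ℝ)) ∧ Tendsto (fun t => β t • u t) atTop (𝓝 x)}

/-- The regular (Fréchet) normal cone to `S` at `x`. -/
def regNormalCone {E : Type*} [NormedAddCommGroup E] [InnerProductSpace ℝ E]
    (S : Set E) (x : E) : Set E :=
  {v | x ∈ S ∧ ∀ ε > 0, ∃ δ > 0, ∀ u ∈ S, ‖u - x‖ < δ → ⟪v, u - x⟫ ≤ ε * ‖u - x‖}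

/-- The limiting normal cone to `S` at `x`. -/
def normalCone {E : Type*} [NormedAddCommGroup E] [InnerProductSpace ℝ E]
    (S : Set E) (x : E) : Set E :=
  {v | x ∈ S ∧ ∃ (xs vs : ℕ → E), (∀ t, vs t ∈ regNormalCone S (xs t)) ∧
    Tendsto xs atTop (𝓝 x) ∧ Tendsto vs atTop (𝓝 v)}

/-- The regular (Fréchet) subdifferential at `x` of the function `φ + δ_C`
(the real-valued function `φ` plus the indicator of `C`). -/
def regSubdiff {E : Type*} [NormedAddCommGroup E] [InnerProductSpace ℝ E]
    (φ : E → ℝ) (C : Set E) (x : E) : Set E :=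
  {v | x ∈ C ∧ ∀ ε > 0, ∃ δ > 0, ∀ u ∈ C, ‖u - x‖ < δ →
      φ u - φ x - ⟪v, u - x⟫ ≥ -(ε * ‖u - x‖)}

/-- The limiting subdifferential at `x` of the function `φ + δ_C`. -/
def limSubdiff {E : Type*} [NormedAddCommGroup E] [InnerProductSpace ℝ E]
    (φ : E → ℝ) (C : Set E) (x : E) : Set E :=
  {v | x ∈ C ∧ ∃ (xs vs : ℕ → E), (∀ t, vs t ∈ regSubdiff φ C (xs t)) ∧
    Tendsto xs atTop (𝓝 x) ∧ Tendsto (fun t => φ (xs t)) atTop (𝓝 (φ x)) ∧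
    Tendsto vs atTop (𝓝 v)}

/-- The smooth part `x ↦ ½ d(Ax, D)²` of the split-feasibility objective
`F = ½ d(A·, D)² + δ_C`. -/
def phiF {n m : ℕ} (A : EuclideanSpace ℝ (Fin n) →L[ℝ] EuclideanSpace ℝ (Fin m))
    (D : Set (EuclideanSpace ℝ (Fin m))) (x : EuclideanSpace ℝ (Fin n)) : ℝ :=
  Metric.infDist (A x) D ^ 2 / 2

/-- A polyhedral set: an intersection of finitely many closed half-spaces. -/
def IsPolyhedral {E : Type*} [NormedAddCommGroup E] [InnerProductSpace ℝ E] (S : Set E) : Prop :=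
  ∃ (k : ℕ) (a : Fin k → E) (b : Fin k → ℝ), S = {x | ∀ i, ⟪a i, x⟫ ≤ b i}

end

set_option maxHeartbeats 1000000 in
/-- Sufficient descent for one projected step when `C` is in addition convex:
if `x ∈ C`, `η ∈ Proj_D(Ax)` and `u = Proj_C(x − Aᵀ(Ax − η)/L)`, then
`½ d(Au, D)² ≤ ½ d(Ax, D)² − ((2L − ‖A‖²)/2)‖u − x‖²`. -/
theorem stmt_5 (n m : ℕ)
    (A : EuclideanSpace ℝ (Fin n) →L[ℝ] EuclideanSpace ℝ (Fin m))
    (C : Set (EuclideanSpace ℝ (Fin n))) (D : Set (EuclideanSpace ℝ (Fin m)))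
    (hCne : C.Nonempty) (hCcl : IsClosed C) (hCconv : Convex ℝ C)
    (hDne : D.Nonempty) (hDcl : IsClosed D)
    (L : ℝ) (hL : 0 < L) (x : EuclideanSpace ℝ (Fin n)) (hx : x ∈ C)
    (η : EuclideanSpace ℝ (Fin m)) (hη : η ∈ projSet D (A x))
    (u : EuclideanSpace ℝ (Fin n))
    (hu : u ∈ projSet C (x - L⁻¹ • ((ContinuousLinearMap.adjoint A) (A x - η)))) :
    Metric.infDist (A u) D ^ 2 / 2 ≤
      Metric.infDist (A x) D ^ 2 / 2 - (2 * L - ‖A‖ ^ 2) / 2 * ‖u - x‖ ^ 2 := by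
  obtain ⟨huC, hud⟩ := hu
  obtain ⟨hηD, hηd⟩ := hη
  set g := (ContinuousLinearMap.adjoint A) (A x - η) with hg
  -- projection characterization on the convex set C
  have hproj : ∀ w ∈ C, ⟪(x - L⁻¹ • g) - u, w - u⟫ ≤ 0 := by
    rw [← norm_eq_iInf_iff_real_inner_le_zero hCconv huC]
    rw [Metric.infDist_eq_iInf] at hud
    simpa [dist_eq_norm] using hud
  have key := hproj x hx
  have hrw : (x - L⁻¹ • g) - u = (x - u) - L⁻¹ • g := by abel
  rw [hrw, inner_sub_left, real_inner_smul_left, real_inner_self_eq_norm_sq] at key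
  -- key : ‖x - u‖^2 - L⁻¹ * ⟪g, x - u⟫ ≤ 0
  have hgx : L * ‖x - u‖ ^ 2 ≤ ⟪g, x - u⟫ := by
    have h1 : ‖x - u‖ ^ 2 ≤ L⁻¹ * ⟪g, x - u⟫ := by linarith
    calc L * ‖x - u‖ ^ 2 ≤ L * (L⁻¹ * ⟪g, x - u⟫) := by
          exact mul_le_mul_of_nonneg_left h1 hL.le
      _ = ⟪g, x - u⟫ := by field_simp
  have hadj : ⟪g, x - u⟫ = ⟪A x - η, A (x - u)⟫ :=
    ContinuousLinearMap.adjoint_inner_left A (x - u) (A x - η)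
  have hAdiff : A (x - u) = (A x - η) - (A u - η) := by
    rw [map_sub]; abel
  have hexp : ‖A u - η‖ ^ 2
      = ‖A x - η‖ ^ 2 - 2 * ⟪A x - η, A (x - u)⟫ + ‖A (x - u)‖ ^ 2 := by
    have := norm_sub_sq_real (A x - η) (A (x - u))
    rw [← hAdiff] at *
    have h2 : A x - η - A (x - u) = A u - η := by rw [map_sub]; abel
    rw [h2] at this
    linarith [this]
  have hop : ‖A (x - u)‖ ≤ ‖A‖ * ‖x - u‖ := A.le_opNorm _
  have hopsq : ‖A (x - u)‖ ^ 2 ≤ ‖A‖ ^ 2 * ‖x - u‖ ^ 2 := by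
    have := mul_le_mul hop hop (norm_nonneg _) (by positivity)
    nlinarith
  have hle : Metric.infDist (A u) D ≤ ‖A u - η‖ := by
    simpa [dist_eq_norm] using Metric.infDist_le_dist_of_mem hηD
  have hsq : Metric.infDist (A u) D ^ 2 ≤ ‖A u - η‖ ^ 2 := by
    have h0 : (0:ℝ) ≤ Metric.infDist (A u) D := Metric.infDist_nonneg
    nlinarith
  have hAx : Metric.infDist (A x) D = ‖A x - η‖ := by
    rw [← hηd, dist_eq_norm]
  have hnorm : ‖u - x‖ = ‖x - u‖ := norm_sub_rev u x
  rw [hAx, hnorm]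
  nlinarith [hsq, hexp, hgx, hopsq, hadj]
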